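/- arXiv:2602.16654 — 3 statements merged into one kernel-verified Lean document; each statement's English description precedes it below -/
import Mathlib

section
/- Let $(a_n)_{n\ge1}$ be a sequence of real numbers with $0 < a_n < A/n$ for all $n$ and some constant $A>0$. Then there exists a nondecreasing sequence of natural numbers $n_1 \le n_2 \le n_3 \le \cdots$ such that $\sum_{k=1}^\infty a_{n_k} < \infty$ while $\sum_{k=1}^\infty n_k a_{n_k} = \infty$. -/
/-- Lemma 2.1: from a positive sequence dominated by `A/n` one can extract a
nondecreasing sequence of indices whose terms sum, but weighted by the index diverge. -/
theorem stmt_0 (a : ℕ → ℝ) (A : ℝ) (hA : 0 < A)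
    (ha : ∀ n : ℕ, 1 ≤ n → 0 < a n ∧ a n < A / n) :
    ∃ nk : ℕ → ℕ, Monotone nk ∧ (∀ k, 1 ≤ nk k) ∧
      Summable (fun k => a (nk k)) ∧
      ¬ Summable (fun k => (nk k : ℝ) * a (nk k)) := by
  have hpos : ∀ m : ℕ, 0 < a (2 ^ m) := fun m => (ha _ Nat.one_le_two_pow).1
  have hlt : ∀ m : ℕ, a (2 ^ m) < A / (2 ^ m) := by
    intro m
    have := (ha (2 ^ m) Nat.one_le_two_pow).2
    simpa using this
  set r : ℕ → ℕ := fun m => ⌈(1 : ℝ) / ((2 ^ m : ℝ) * a (2 ^ m))⌉₊ with hrdef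
  have hr1 : ∀ m, 1 ≤ r m := by
    intro m
    have h0 : (0:ℝ) < 1 / ((2 ^ m : ℝ) * a (2 ^ m)) := by
      have := hpos m; positivity
    exact Nat.ceil_pos.mpr h0
  set S : ℕ → ℕ := fun M => ∑ m ∈ Finset.range M, r m with hSdef
  have hS0 : S 0 = 0 := by simp [hSdef]
  have hSsucc : ∀ M, S (M + 1) = S M + r M := by
    intro M; simp [hSdef, Finset.sum_range_succ]
  have hSmono : StrictMono S := by
    apply strictMono_nat_of_lt_succ
    intro M
    rw [hSsucc]
    have := hr1 M
    omega
  have hSle : ∀ M, M ≤ S M := fun M => hSmono.le_apply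
  set f : ℕ → ℕ := fun k => Nat.findGreatest (fun m => S m ≤ k) k with hfdef
  have hfS : ∀ k, S (f k) ≤ k := by
    intro k
    exact Nat.findGreatest_spec (P := fun m => S m ≤ k) (Nat.zero_le k) (le_of_eq_of_le hS0 (Nat.zero_le k))
  have hfk : ∀ k, k < S (f k + 1) := by
    intro k
    by_contra h
    push_neg at h
    have h1 : f k + 1 ≤ k := le_trans (hSle _) h
    exact Nat.findGreatest_is_greatest (Nat.lt_succ_self _) h1 h
  have hblock : ∀ M k, S M ≤ k → k < S (M + 1) → f k = M := by
    intro M k h1 h2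
    have hMk : M ≤ k := le_trans (hSle M) h1
    have hle : M ≤ f k := Nat.le_findGreatest hMk h1
    have hge : f k ≤ M := by
      by_contra h
      push_neg at h
      have h3 : S (M + 1) ≤ S (f k) := hSmono.monotone h
      have := hfS k
      omega
    omega
  have hfmono : Monotone f := by
    intro i j hij
    exact Nat.findGreatest_mono (fun m hm => le_trans hm hij) hij
  -- key sum identity
  have key : ∀ (G : ℕ → ℝ) (M : ℕ),
      ∑ k ∈ Finset.range (S M), G (f k) = ∑ m ∈ Finset.range M, (r m : ℝ) * G m := by
    intro G M
    induction M with
    | zero => simp [hS0]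
    | succ M ih =>
      have hle : S M ≤ S (M + 1) := (hSmono.monotone (Nat.le_succ M))
      have hsplit : ∑ k ∈ Finset.Ico 0 (S M), G (f k)
          + ∑ k ∈ Finset.Ico (S M) (S (M+1)), G (f k)
          = ∑ k ∈ Finset.Ico 0 (S (M+1)), G (f k) :=
        Finset.sum_Ico_consecutive _ (Nat.zero_le _) hle
      have hconst : ∑ k ∈ Finset.Ico (S M) (S (M+1)), G (f k) = (r M : ℝ) * G M := by
        have hcongr : ∑ k ∈ Finset.Ico (S M) (S (M+1)), G (f k)
            = ∑ _k ∈ Finset.Ico (S M) (S (M+1)), G M :=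
          Finset.sum_congr rfl (fun k hk => by
            rw [Finset.mem_Ico] at hk
            rw [hblock M k hk.1 hk.2])
        rw [hcongr, Finset.sum_const, Nat.card_Ico, hSsucc]
        simp [nsmul_eq_mul]
      rw [Finset.range_eq_Ico, ← hsplit, ← Finset.range_eq_Ico, ih, hconst,
        Finset.sum_range_succ]
  refine ⟨fun k => 2 ^ (f k), fun i j hij => Nat.pow_le_pow_right (by norm_num) (hfmono hij),
    fun k => Nat.one_le_two_pow, ?_, ?_⟩
  · -- summable
    apply summable_of_sum_range_le (c := (1 + A) * 2)
      (fun k => le_of_lt (hpos (f k)))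
    intro n
    have h1 : ∑ k ∈ Finset.range n, a (2 ^ f k)
        ≤ ∑ k ∈ Finset.range (S n), a (2 ^ f k) :=
      Finset.sum_le_sum_of_subset_of_nonneg
        (Finset.range_subset_range.mpr (hSle n)) (fun k _ _ => le_of_lt (hpos (f k)))
    have h2 : ∑ k ∈ Finset.range (S n), a (2 ^ f k)
        = ∑ m ∈ Finset.range n, (r m : ℝ) * a (2 ^ m) := key (fun m => a (2 ^ m)) n
    have h3 : ∀ m, (r m : ℝ) * a (2 ^ m) ≤ (1 + A) * (1/2) ^ m := by
      intro m
      have hx : (0:ℝ) < (2 ^ m : ℝ) * a (2 ^ m) := by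
        have := hpos m; positivity
      have hceil : (r m : ℝ) < 1 / ((2 ^ m : ℝ) * a (2 ^ m)) + 1 :=
        Nat.ceil_lt_add_one (le_of_lt (by positivity))
      have h4 : (r m : ℝ) * a (2 ^ m)
          ≤ (1 / ((2 ^ m : ℝ) * a (2 ^ m)) + 1) * a (2 ^ m) :=
        mul_le_mul_of_nonneg_right (le_of_lt hceil) (le_of_lt (hpos m))
      have h5 : (1 / ((2 ^ m : ℝ) * a (2 ^ m)) + 1) * a (2 ^ m)
          = 1 / (2 ^ m : ℝ) + a (2 ^ m) := by
        field_simp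
        rw [mul_add, mul_one_div_cancel (ne_of_gt (hpos m))]
        ring
      have h6 : a (2 ^ m) ≤ A / (2 ^ m : ℝ) := le_of_lt (hlt m)
      have h7 : (1:ℝ) / (2 ^ m : ℝ) + A / (2 ^ m : ℝ) = (1 + A) * (1/2) ^ m := by
        rw [← add_div, one_div, inv_pow, div_eq_mul_inv]
      calc (r m : ℝ) * a (2 ^ m) ≤ 1 / (2 ^ m : ℝ) + a (2 ^ m) := by rw [← h5]; exact h4
        _ ≤ 1 / (2 ^ m : ℝ) + A / (2 ^ m : ℝ) := by linarith
        _ = (1 + A) * (1/2) ^ m := h7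
    calc ∑ k ∈ Finset.range n, a (2 ^ f k)
        ≤ ∑ m ∈ Finset.range n, (r m : ℝ) * a (2 ^ m) := by rw [← h2]; exact h1
      _ ≤ ∑ m ∈ Finset.range n, (1 + A) * (1/2) ^ m := Finset.sum_le_sum (fun m _ => h3 m)
      _ = (1 + A) * ∑ m ∈ Finset.range n, ((1:ℝ)/2) ^ m := by rw [Finset.mul_sum]
      _ ≤ (1 + A) * 2 := by
          have hg := sum_geometric_two_le n
          have hA1 : (0:ℝ) ≤ 1 + A := by linarith
          exact mul_le_mul_of_nonneg_left hg hA1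
  · -- not summable
    intro hs
    have hterm : ∀ k, (0:ℝ) ≤ ((2 ^ (f k) : ℕ) : ℝ) * a (2 ^ f k) := by
      intro k
      have := hpos (f k)
      positivity
    have hbig : ∀ M : ℕ, (M : ℝ) ≤ ∑' k, ((2 ^ (f k) : ℕ) : ℝ) * a (2 ^ f k) := by
      intro M
      have heq : ∑ k ∈ Finset.range (S M), ((2 ^ (f k) : ℕ) : ℝ) * a (2 ^ f k)
          = ∑ m ∈ Finset.range M, (r m : ℝ) * (((2 ^ m : ℕ) : ℝ) * a (2 ^ m)) :=
        key (fun m => ((2 ^ m : ℕ) : ℝ) * a (2 ^ m)) M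
      have hone : ∀ m, (1:ℝ) ≤ (r m : ℝ) * (((2 ^ m : ℕ) : ℝ) * a (2 ^ m)) := by
        intro m
        have hx : (0:ℝ) < ((2 ^ m : ℕ) : ℝ) * a (2 ^ m) := by
          have := hpos m; positivity
        have hceil : 1 / (((2 ^ m : ℕ) : ℝ) * a (2 ^ m)) ≤ (r m : ℝ) := by
          have h := Nat.le_ceil ((1:ℝ) / ((2 ^ m : ℝ) * a (2 ^ m)))
          have hcast : ((2 ^ m : ℕ) : ℝ) = (2 : ℝ) ^ m := by push_cast; ring
          rw [hcast]
          exact h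
        calc (1:ℝ) = (1 / (((2 ^ m : ℕ) : ℝ) * a (2 ^ m))) * (((2 ^ m : ℕ) : ℝ) * a (2 ^ m)) := by
              rw [one_div, inv_mul_cancel₀ (ne_of_gt hx)]
          _ ≤ (r m : ℝ) * (((2 ^ m : ℕ) : ℝ) * a (2 ^ m)) :=
              mul_le_mul_of_nonneg_right hceil (le_of_lt hx)
      calc (M : ℝ) = ∑ m ∈ Finset.range M, (1:ℝ) := by simp
        _ ≤ ∑ m ∈ Finset.range M, (r m : ℝ) * (((2 ^ m : ℕ) : ℝ) * a (2 ^ m)) :=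
            Finset.sum_le_sum (fun m _ => hone m)
        _ = ∑ k ∈ Finset.range (S M), ((2 ^ (f k) : ℕ) : ℝ) * a (2 ^ f k) := heq.symm
        _ ≤ ∑' k, ((2 ^ (f k) : ℕ) : ℝ) * a (2 ^ f k) :=
            Summable.sum_le_tsum _ (fun k _ => hterm k) hs
    obtain ⟨M, hM⟩ := exists_nat_gt (∑' k, ((2 ^ (f k) : ℕ) : ℝ) * a (2 ^ f k))
    exact absurd (hbig M) (not_le.mpr hM)
end

section
/- Let $(X,\mathcal{B},\mu)$ be a probability space and let $\mathcal{T}$ be an ergodic family of measure-preserving transformations of $X$ (i.e., any set invariant under every $\tau \in \mathcal{T}$ has measure $0$ or $1$), satisfying the mixing property: for all measurable $A, B$ and all $\theta > 1$ there exists $\tau \in \mathcal{T}$ with $\mu(B \cap \tau^{-1}[A]) \le \theta\, \mu(A)\mu(B)$. Let $(A_n)$ be measurable sets with $\sum_{n=1}^\infty \mu(A_n) = \infty$. Then there exists a sequence $(\tau_n) \subseteq \mathcal{T}$ such that for every $M$, $\mu\left(\bigcup_{n \ge M} \tau_n^{-1}[A_n]\right) = 1$; equivalently, $\tau_n(x)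 \in A_n$ for infinitely many $n$, for almost every $x \in X$. -/
open MeasureTheory

/-- Lemma 5.2: given an ergodic family `𝒯` of measure-preserving transformations of a
probability space satisfying the mixing property, and sets `Aₙ` with `∑ μ(Aₙ) = ∞`,
there are `τₙ ∈ 𝒯` so that `μ(⋃_{n ≥ M} τₙ⁻¹ Aₙ) = 1` for every `M`; that is,
`τₙ(x) ∈ Aₙ` for infinitely many `n`, for almost every `x`. -/
theorem stmt_13 {X : Type*} [MeasurableSpace X] (μ : Measure X) [IsProbabilityMeasure μ]
    (𝒯 : Set (X → X))
    (hmp : ∀ τ ∈ 𝒯, MeasurePreserving τ μ μ)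
    (herg : ∀ A : Set X, MeasurableSet A → (∀ τ ∈ 𝒯, τ ⁻¹' A = A) →
      μ A = 0 ∨ μ A = 1)
    (hmix : ∀ A B : Set X, MeasurableSet A → MeasurableSet B → ∀ θ : ℝ, 1 < θ →
      ∃ τ ∈ 𝒯, μ (B ∩ τ ⁻¹' A) ≤ ENNReal.ofReal θ * μ A * μ B)
    (A : ℕ → Set X) (hA : ∀ n, MeasurableSet (A n))
    (hdiv : ∑' n, μ (A n) = ⊤) :
    ∃ τ : ℕ → X → X, (∀ n, τ n ∈ 𝒯) ∧
      ∀ M : ℕ, μ (⋃ n : ℕ, ⋃ (_ : M ≤ n), (τ n) ⁻¹' (A n)) = 1 := by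
  classical
  -- 𝒯 is nonempty
  obtain ⟨τ0, hτ0, -⟩ := hmix ∅ ∅ MeasurableSet.empty MeasurableSet.empty 2 one_lt_two
  -- Step 1: finite construction with product bound
  have aux1 : ∀ m N : ℕ, ∃ σ : ℕ → X → X, (∀ k, σ k ∈ 𝒯) ∧
      μ (⋂ k ∈ Finset.Ico m N, σ k ⁻¹' (A k)ᶜ) ≤
        ∏ k ∈ Finset.Ico m N, (ENNReal.ofReal (1 + (2⁻¹ : ℝ) ^ k) * μ ((A k)ᶜ)) := by
    intro m N
    induction N with
    | zero =>
      refine ⟨fun _ => τ0, fun _ => hτ0, ?_⟩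
      simp
    | succ N ih =>
      obtain ⟨σ, hσ, hbd⟩ := ih
      by_cases hm : m ≤ N
      · -- extend
        set B := ⋂ k ∈ Finset.Ico m N, σ k ⁻¹' (A k)ᶜ with hB
        have hBmeas : MeasurableSet B := by
          apply Finset.measurableSet_biInter
          intro k _
          exact (hmp (σ k) (hσ k)).measurable (hA k).compl
        have hθ : (1 : ℝ) < 1 + (2⁻¹ : ℝ) ^ N := by
          have : (0:ℝ) < (2⁻¹:ℝ) ^ N := by positivity
          linarith
        obtain ⟨τ, hτ, hbnd⟩ := hmix ((A N)ᶜ) B (hA N).compl hBmeas _ hθ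
        refine ⟨Function.update σ N τ, ?_, ?_⟩
        · intro k
          by_cases hk : k = N
          · subst hk; rwa [Function.update_self]
          · rw [Function.update_of_ne hk]; exact hσ k
        · have hins : Finset.Ico m (N + 1) = insert N (Finset.Ico m N) := by
            ext x; simp only [Finset.mem_Ico, Finset.mem_insert]; omega
          have hNnot : N ∉ Finset.Ico m N := by simp
          have hcongr : (⋂ k ∈ Finset.Ico m N, (Function.update σ N τ) k ⁻¹' (A k)ᶜ) = B := by
            rw [hB]
            apply Set.iInter₂_congr
            intro k hk
            have : k ≠ N := by
              simp only [Finset.mem_Ico] at hk; omega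
            rw [Function.update_of_ne this]
          rw [hins, Finset.set_biInter_insert, Function.update_self, hcongr,
            Finset.prod_insert hNnot]
          calc μ (τ ⁻¹' (A N)ᶜ ∩ B) = μ (B ∩ τ ⁻¹' (A N)ᶜ) := by rw [Set.inter_comm]
            _ ≤ ENNReal.ofReal (1 + (2⁻¹ : ℝ) ^ N) * μ ((A N)ᶜ) * μ B := hbnd
            _ = ENNReal.ofReal (1 + (2⁻¹ : ℝ) ^ N) * μ ((A N)ᶜ) * μ B := rfl
            _ ≤ ENNReal.ofReal (1 + (2⁻¹ : ℝ) ^ N) * μ ((A N)ᶜ) *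
                ∏ k ∈ Finset.Ico m N, (ENNReal.ofReal (1 + (2⁻¹ : ℝ) ^ k) * μ ((A k)ᶜ)) := by
              rw [mul_assoc, mul_assoc]
              exact mul_le_mul_right (mul_le_mul_right hbd _) _
      · -- Ico m (N+1) is empty
        have : Finset.Ico m (N + 1) = ∅ := by
          apply Finset.Ico_eq_empty; omega
        refine ⟨σ, hσ, ?_⟩
        rw [this]
        simp
  -- Step 2: constant bound on the product of the θ's
  have aux2 : ∀ s : Finset ℕ, ∏ k ∈ s, ENNReal.ofReal (1 + (2⁻¹ : ℝ) ^ k) ≤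
      ENNReal.ofReal (Real.exp 2) := by
    intro s
    rw [← ENNReal.ofReal_prod_of_nonneg (fun k _ => by positivity)]
    apply ENNReal.ofReal_le_ofReal
    calc ∏ k ∈ s, (1 + (2⁻¹ : ℝ) ^ k) ≤ ∏ k ∈ s, Real.exp ((2⁻¹ : ℝ) ^ k) := by
          apply Finset.prod_le_prod (fun k _ => by positivity)
          intro k _
          have := Real.add_one_le_exp ((2⁻¹ : ℝ) ^ k)
          linarith
      _ = Real.exp (∑ k ∈ s, (2⁻¹ : ℝ) ^ k) := (Real.exp_sum s _).symm
      _ ≤ Real.exp 2 := by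
          apply Real.exp_le_exp.2
          have hsum : ∑ k ∈ s, (2⁻¹ : ℝ) ^ k ≤ ∑' k : ℕ, (2⁻¹ : ℝ) ^ k := by
            apply Summable.sum_le_tsum _ (fun k _ => by positivity)
            exact summable_geometric_of_lt_one (by norm_num) (by norm_num)
          rw [tsum_geometric_of_lt_one (by norm_num) (by norm_num)] at hsum
          norm_num at hsum
          linarith
  -- Step 3: each complement measure is at most exp(-measure)
  have aux3 : ∀ k : ℕ, μ ((A k)ᶜ) ≤ ENNReal.ofReal (Real.exp (-(μ (A k)).toReal)) := by
    intro k
    have h1 : μ ((A k)ᶜ) = 1 - μ (A k) := by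
      rw [measure_compl (hA k) (measure_ne_top μ _), measure_univ]
    have h2 : μ (A k) = ENNReal.ofReal ((μ (A k)).toReal) :=
      (ENNReal.ofReal_toReal (measure_ne_top μ _)).symm
    have ha : (0:ℝ) ≤ (μ (A k)).toReal := ENNReal.toReal_nonneg
    rw [h1]
    calc (1 : ENNReal) - μ (A k) = ENNReal.ofReal (1 - (μ (A k)).toReal) := by
          rw [ENNReal.ofReal_sub _ ha, ENNReal.ofReal_one, ← h2]
      _ ≤ ENNReal.ofReal (Real.exp (-(μ (A k)).toReal)) := by
          apply ENNReal.ofReal_le_ofReal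
          have := Real.add_one_le_exp (-(μ (A k)).toReal)
          linarith
  -- Step 4: divergence of partial sums on tails
  have aux4 : ∀ (m : ℕ) (c : ℝ), 0 ≤ c →
      ∃ N : ℕ, c ≤ ∑ k ∈ Finset.Ico m N, (μ (A k)).toReal := by
    intro m c hc
    rw [ENNReal.tsum_eq_iSup_sum] at hdiv
    have hlt : ((m : ENNReal) + ENNReal.ofReal c) < ⨆ s : Finset ℕ, ∑ k ∈ s, μ (A k) := by
      rw [hdiv]
      exact ENNReal.add_lt_top.2 ⟨by simp, ENNReal.ofReal_lt_top⟩
    obtain ⟨s, hs⟩ := lt_iSup_iff.1 hlt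
    set N : ℕ := max m ((s.sup id) + 1) with hN
    have hsub : s ⊆ Finset.range N := by
      intro x hx
      rw [Finset.mem_range]
      have : x ≤ s.sup id := Finset.le_sup (f := id) hx
      omega
    have hsN : ((m : ENNReal) + ENNReal.ofReal c) < ∑ k ∈ Finset.range N, μ (A k) :=
      lt_of_lt_of_le hs (Finset.sum_le_sum_of_subset hsub)
    have hmN : m ≤ N := le_max_left _ _
    have hsplit : ∑ k ∈ Finset.range N, μ (A k) =
        ∑ k ∈ Finset.range m, μ (A k) + ∑ k ∈ Finset.Ico m N, μ (A k) := by
      rw [Finset.range_eq_Ico, Finset.range_eq_Ico]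
      exact (Finset.sum_Ico_consecutive _ (Nat.zero_le m) hmN).symm
    have hhead : ∑ k ∈ Finset.range m, μ (A k) ≤ (m : ENNReal) := by
      calc ∑ k ∈ Finset.range m, μ (A k) ≤ ∑ _k ∈ Finset.range m, (1 : ENNReal) :=
            Finset.sum_le_sum (fun k _ => prob_le_one)
        _ = (m : ENNReal) := by simp
    have htail : ENNReal.ofReal c < ∑ k ∈ Finset.Ico m N, μ (A k) := by
      by_contra h
      push_neg at h
      have : ∑ k ∈ Finset.range N, μ (A k) ≤ (m : ENNReal) + ENNReal.ofReal c := by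
        rw [hsplit]
        exact add_le_add hhead h
      exact absurd (lt_of_lt_of_le hsN this) (lt_irrefl _)
    refine ⟨N, ?_⟩
    have hfin : ∑ k ∈ Finset.Ico m N, μ (A k) ≠ ⊤ :=
      (ENNReal.sum_lt_top.2 (fun k _ => (measure_ne_top μ _).lt_top)).ne
    have := ENNReal.toReal_mono hfin htail.le
    rw [ENNReal.toReal_ofReal hc, ENNReal.toReal_sum (fun k _ => measure_ne_top μ _)] at this
    exact this
  -- Step 5: key existence, per starting index m
  have key : ∀ m : ℕ, ∃ N : ℕ, m < N ∧ ∃ σ : ℕ → X → X, (∀ k, σ k ∈ 𝒯) ∧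
      μ (⋂ k ∈ Finset.Ico m N, σ k ⁻¹' (A k)ᶜ) ≤ ENNReal.ofReal (Real.exp (-(m : ℝ))) := by
    intro m
    obtain ⟨N, hN⟩ := aux4 m ((m : ℝ) + 2) (by positivity)
    obtain ⟨σ, hσ, hbd⟩ := aux1 m N
    have hmN : m < N := by
      by_contra h
      push_neg at h
      rw [Finset.Ico_eq_empty (by omega)] at hN
      simp at hN
      have : (0:ℝ) < (m : ℝ) + 2 := by positivity
      linarith
    refine ⟨N, hmN, σ, hσ, ?_⟩
    calc μ (⋂ k ∈ Finset.Ico m N, σ k ⁻¹' (A k)ᶜ)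
        ≤ ∏ k ∈ Finset.Ico m N, (ENNReal.ofReal (1 + (2⁻¹ : ℝ) ^ k) * μ ((A k)ᶜ)) := hbd
      _ = (∏ k ∈ Finset.Ico m N, ENNReal.ofReal (1 + (2⁻¹ : ℝ) ^ k)) *
          ∏ k ∈ Finset.Ico m N, μ ((A k)ᶜ) := Finset.prod_mul_distrib
      _ ≤ ENNReal.ofReal (Real.exp 2) *
          ∏ k ∈ Finset.Ico m N, ENNReal.ofReal (Real.exp (-(μ (A k)).toReal)) := by
          exact mul_le_mul' (aux2 _) (Finset.prod_le_prod' (fun k _ => aux3 k))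
      _ = ENNReal.ofReal (Real.exp 2) *
          ENNReal.ofReal (Real.exp (-(∑ k ∈ Finset.Ico m N, (μ (A k)).toReal))) := by
          rw [← ENNReal.ofReal_prod_of_nonneg (fun k _ => (Real.exp_pos _).le),
            ← Real.exp_sum, ← Finset.sum_neg_distrib]
      _ ≤ ENNReal.ofReal (Real.exp (-(m : ℝ))) := by
          rw [← ENNReal.ofReal_mul (Real.exp_pos _).le, ← Real.exp_add]
          apply ENNReal.ofReal_le_ofReal
          apply Real.exp_le_exp.2
          linarith
  choose Nf hNf σf hσf hbdf using key
  -- block boundaries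
  obtain ⟨b, hb_succ⟩ : ∃ b : ℕ → ℕ, ∀ j, b (j + 1) = Nf (b j) :=
    ⟨fun j => Nat.rec 0 (fun _ ih => Nf ih) j, fun j => rfl⟩
  have hb_mono : StrictMono b := by
    apply strictMono_nat_of_lt_succ
    intro j
    rw [hb_succ]
    exact hNf (b j)
  have hb_ge : ∀ j, j ≤ b j := fun j => hb_mono.le_apply
  -- the combined sequence
  obtain ⟨τ, hτdef⟩ : ∃ τ : ℕ → X → X, ∀ n,
      τ n = σf (b (@Nat.findGreatest (fun j => b j ≤ n) (fun _ => Nat.decLe _ _) n)) n :=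
    ⟨_, fun n => rfl⟩
  have hτmem : ∀ n, τ n ∈ 𝒯 := fun n => (hτdef n) ▸ hσf _ n
  refine ⟨τ, hτmem, ?_⟩
  intro M
  -- identify τ on each block
  have hblock : ∀ j k, b j ≤ k → k < b (j + 1) → τ k = σf (b j) k := by
    intro j k hk1 hk2
    have hjk : j ≤ k := le_trans (hb_ge j) hk1
    have hfg : @Nat.findGreatest (fun i => b i ≤ k) (fun _ => Nat.decLe _ _) k = j := by
      apply le_antisymm
      · by_contra h
        push_neg at h
        have h1 : b (@Nat.findGreatest (fun i => b i ≤ k) (fun _ => Nat.decLe _ _) k) ≤ k :=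
          Nat.findGreatest_spec (P := fun i => b i ≤ k) hjk hk1
        have h2 : b (j + 1) ≤ b (@Nat.findGreatest (fun i => b i ≤ k) (fun _ => Nat.decLe _ _) k) :=
          hb_mono.monotone h
        omega
      · exact Nat.le_findGreatest (P := fun i => b i ≤ k) hjk hk1
    rw [hτdef k]
    simp only [hfg]
  -- measurability of the union
  have hU : MeasurableSet (⋃ n : ℕ, ⋃ (_ : M ≤ n), (τ n) ⁻¹' (A n)) := by
    apply MeasurableSet.iUnion
    intro n
    apply MeasurableSet.iUnion
    intro _
    exact (hmp (τ n) (hτmem n)).measurable (hA n)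
  rw [← prob_compl_eq_zero_iff hU]
  have hcompl : (⋃ n : ℕ, ⋃ (_ : M ≤ n), (τ n) ⁻¹' (A n))ᶜ =
      ⋂ n : ℕ, ⋂ (_ : M ≤ n), (τ n) ⁻¹' (A n)ᶜ := by
    rw [Set.compl_iUnion]
    apply Set.iInter_congr
    intro n
    rw [Set.compl_iUnion]
    apply Set.iInter_congr
    intro _
    rw [Set.preimage_compl]
  rw [hcompl]
  -- the complement has measure ≤ exp(-j) for every j ≥ M
  have hle : ∀ j : ℕ, M ≤ j →
      μ (⋂ n : ℕ, ⋂ (_ : M ≤ n), (τ n) ⁻¹' (A n)ᶜ) ≤ ENNReal.ofReal (Real.exp (-(j : ℝ))) := by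
    intro j hj
    have hMbj : M ≤ b j := le_trans hj (hb_ge j)
    have hsub : (⋂ n : ℕ, ⋂ (_ : M ≤ n), (τ n) ⁻¹' (A n)ᶜ) ⊆
        ⋂ k ∈ Finset.Ico (b j) (Nf (b j)), σf (b j) k ⁻¹' (A k)ᶜ := by
      intro x hx
      simp only [Set.mem_iInter] at hx ⊢
      intro k hk
      rw [Finset.mem_Ico] at hk
      have hτk : τ k = σf (b j) k := hblock j k hk.1 (by rw [hb_succ]; exact hk.2)
      rw [← hτk]
      exact hx k (le_trans hMbj hk.1)
    calc μ (⋂ n : ℕ, ⋂ (_ : M ≤ n), (τ n) ⁻¹' (A n)ᶜ)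
        ≤ μ (⋂ k ∈ Finset.Ico (b j) (Nf (b j)), σf (b j) k ⁻¹' (A k)ᶜ) := measure_mono hsub
      _ ≤ ENNReal.ofReal (Real.exp (-((b j) : ℝ))) := hbdf (b j)
      _ ≤ ENNReal.ofReal (Real.exp (-(j : ℝ))) := by
          apply ENNReal.ofReal_le_ofReal
          apply Real.exp_le_exp.2
          have := hb_ge j
          simp only [neg_le_neg_iff]
          exact_mod_cast this
  -- conclude: measure is 0
  have htend : Filter.Tendsto (fun j : ℕ => ENNReal.ofReal (Real.exp (-(j : ℝ))))
      Filter.atTop (nhds 0) := by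
    have h1 : Filter.Tendsto (fun j : ℕ => Real.exp (-(j : ℝ))) Filter.atTop (nhds 0) :=
      Real.tendsto_exp_neg_atTop_nhds_zero.comp tendsto_natCast_atTop_atTop
    have := (ENNReal.continuous_ofReal.tendsto 0).comp h1
    simpa [Function.comp_def] using this
  have : μ (⋂ n : ℕ, ⋂ (_ : M ≤ n), (τ n) ⁻¹' (A n)ᶜ) ≤ 0 := by
    apply ge_of_tendsto htend
    filter_upwards [Filter.eventually_ge_atTop M] with j hj
    exact hle j hj
  exact le_antisymm this zero_le
end

section
/- Let $\Omega_\lambda = \{(x_1,x_2) \in [0,1)^2 : 0 < 2x_1 < x_2 < 1,\ x_1 x_2 < (2\lambda)^{-1/2}\}$ for $\lambda > 2$. Then the Lebesgue measure of $\Omega_\lambda$ satisfies $|\Omega_\lambda| \ge \frac{1}{4\sqrt{2}} \lambda^{-1/2} \ln(\lambda/2)$, and consequently $\sup_{\lambda > 2} \lambda^{1/2} |\Omega_\lambda| = \infty$. -/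
open MeasureTheory

/-- The region `Ω_λ = {(x₁,x₂) ∈ [0,1)² : 0 < 2x₁ < x₂ < 1, x₁x₂ < (2λ)^{-1/2}}`. -/
def Omega (lam : ℝ) : Set (ℝ × ℝ) :=
  {p : ℝ × ℝ | 0 ≤ p.1 ∧ p.1 < 1 ∧ 0 ≤ p.2 ∧ p.2 < 1 ∧
    0 < 2 * p.1 ∧ 2 * p.1 < p.2 ∧ p.2 < 1 ∧ p.1 * p.2 < (2 * lam) ^ (-(1:ℝ)/2)}

open Set in
lemma omega_lower (lam : ℝ) (hlam : 2 < lam) :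
    (1 / (4 * Real.sqrt 2)) * lam ^ (-(1:ℝ)/2) * Real.log (lam / 2)
      ≤ (volume (Omega lam)).toReal := by
  have hlpos : (0:ℝ) < lam := by linarith
  have h2l : (4:ℝ) < 2 * lam := by linarith
  set c : ℝ := (2 * lam) ^ (-(1:ℝ)/2) with hc
  have hcpos : 0 < c := Real.rpow_pos_of_pos (by linarith) _
  have hchalf : c < 1/2 := by
    have h4 : ((4:ℝ)) ^ (-(1:ℝ)/2) = 1/2 := by
      have : ((4:ℝ)) = (2:ℝ)^(2:ℕ) := by norm_num
      rw [this, ← Real.rpow_natCast 2 2, ← Real.rpow_mul (by norm_num)]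
      norm_num
    calc c < (4:ℝ) ^ (-(1:ℝ)/2) := by
            apply Real.rpow_lt_rpow_of_neg (by norm_num) h2l (by norm_num)
      _ = 1/2 := h4
  set t : ℝ := Real.sqrt (2 * c) with ht
  have ht0 : 0 < t := Real.sqrt_pos.mpr (by linarith)
  have ht1 : t < 1 := by
    have : t < Real.sqrt 1 := Real.sqrt_lt_sqrt (by linarith) (by linarith)
    simpa using this
  have htsq : t ^ 2 = 2 * c := Real.sq_sqrt (by linarith)
  -- the subregion
  set R : Set (ℝ × ℝ) := regionBetween (fun _ => (0:ℝ)) (fun x => c / x) (Ioo t 1) with hR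
  have hRmeas : MeasurableSet R :=
    measurableSet_regionBetween measurable_const (measurable_const.div measurable_id)
      measurableSet_Ioo
  have hsub : Prod.swap ⁻¹' R ⊆ Omega lam := by
    rintro ⟨x, y⟩ hp
    simp only [Set.mem_preimage, hR, regionBetween, Set.mem_setOf_eq, Prod.swap] at hp
    obtain ⟨⟨hyt, hy1⟩, hx0, hxc⟩ := hp
    have hy0 : 0 < y := lt_trans ht0 hyt
    have hkey : c / y < y / 2 := by
      rw [div_lt_div_iff₀ hy0 (by norm_num)]
      nlinarith [htsq, sq_nonneg (y - t)]
    have hx2 : x < y / 2 := lt_trans hxc hkey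
    refine ⟨le_of_lt hx0, by linarith, le_of_lt hy0, hy1, by linarith, by linarith, hy1, ?_⟩
    calc x * y < (c / y) * y := by exact mul_lt_mul_of_pos_right hxc hy0
      _ = c := div_mul_cancel₀ c (ne_of_gt hy0)
  -- integrability
  have hcont : ContinuousOn (fun x => c / x) (Icc t 1) := by
    apply continuousOn_const.div continuousOn_id
    intro x hx
    exact ne_of_gt (lt_of_lt_of_le ht0 hx.1)
  have hint : IntegrableOn (fun x => c / x) (Ioo t 1) :=
    (hcont.integrableOn_Icc).mono_set Set.Ioo_subset_Icc_self
  have hint0 : IntegrableOn (fun _ : ℝ => (0:ℝ)) (Ioo t 1) := integrableOn_const measure_Ioo_lt_top.ne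
  -- volume of R
  have hvolR : volume R = ENNReal.ofReal (∫ y in Ioo t 1, c / y) := by
    rw [hR, Measure.volume_eq_prod]
    rw [volume_regionBetween_eq_integral hint0 hint measurableSet_Ioo
      (fun x hx => le_of_lt (div_pos hcpos (lt_trans ht0 hx.1)))]
    congr 1
    apply setIntegral_congr_fun measurableSet_Ioo
    intro x hx
    simp
  -- value of the integral
  have hval : (∫ y in Ioo t 1, c / y) = c * Real.log (1 / t) := by
    rw [← integral_Ioc_eq_integral_Ioo, ← intervalIntegral.integral_of_le ht1.le]
    simp_rw [div_eq_mul_inv]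
    rw [intervalIntegral.integral_const_mul, integral_inv_of_pos ht0 one_pos, one_div]
    rw [one_mul]
  -- identify the bound
  have hlogt : Real.log (1 / t) = (1/4) * Real.log (lam / 2) := by
    rw [one_div, Real.log_inv, ht, Real.log_sqrt (by linarith), hc,
      Real.log_mul (by norm_num) (ne_of_gt hcpos), hc,
      Real.log_rpow (by linarith), Real.log_mul (by norm_num) (ne_of_gt hlpos),
      Real.log_div (ne_of_gt hlpos) (by norm_num)]
    ring
  have hceq : c = (1 / Real.sqrt 2) * lam ^ (-(1:ℝ)/2) := by
    rw [hc, Real.mul_rpow (by norm_num) (le_of_lt hlpos)]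
    congr 1
    rw [show (-(1:ℝ)/2) = -(1/2) by ring, Real.rpow_neg (by norm_num : (0:ℝ) ≤ 2),
      ← Real.sqrt_eq_rpow, one_div]
  have hbound : (1 / (4 * Real.sqrt 2)) * lam ^ (-(1:ℝ)/2) * Real.log (lam / 2)
      = c * Real.log (1 / t) := by
    rw [hlogt, hceq]
    have h2 : Real.sqrt 2 ≠ 0 := by positivity
    field_simp
  -- finiteness
  have hfin : volume (Omega lam) ≠ ⊤ := by
    have hsub2 : Omega lam ⊆ (Icc (0:ℝ) 1) ×ˢ (Icc (0:ℝ) 1) := by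
      rintro ⟨x, y⟩ ⟨h1, h2, h3, h4, _⟩
      exact ⟨⟨h1, le_of_lt h2⟩, ⟨h3, le_of_lt h4⟩⟩
    have : volume (Omega lam) ≤ volume ((Icc (0:ℝ) 1) ×ˢ (Icc (0:ℝ) 1)) := measure_mono hsub2
    rw [Measure.volume_eq_prod, Measure.prod_prod, Real.volume_Icc] at this
    refine ne_top_of_le_ne_top ?_ this
    norm_num
  rw [← ENNReal.ofReal_le_iff_le_toReal hfin, hbound, ← hval, ← hvolR]
  calc volume R = volume (Prod.swap ⁻¹' R) := by
        rw [Measure.volume_eq_prod, Measure.measurePreserving_swap.measure_preimage hRmeas.nullMeasurableSet]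
    _ ≤ volume (Omega lam) := measure_mono hsub

/-- For `λ > 2`, the measure of `Ω_λ` is at least
`(1/(4√2)) λ^{-1/2} ln(λ/2)`; consequently `sup_{λ>2} λ^{1/2} |Ω_λ| = ∞`. -/
theorem stmt_17 :
    (∀ lam : ℝ, 2 < lam →
      (1 / (4 * Real.sqrt 2)) * lam ^ (-(1:ℝ)/2) * Real.log (lam / 2)
        ≤ (volume (Omega lam)).toReal) ∧
    (∀ C : ℝ, ∃ lam : ℝ, 2 < lam ∧
      C < lam ^ ((1:ℝ)/2) * (volume (Omega lam)).toReal) := by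
  constructor
  · exact omega_lower
  · intro C
    have hs2 : (0:ℝ) < Real.sqrt 2 := by positivity
    set E : ℝ := 4 * Real.sqrt 2 * (|C| + 1) with hE
    have hEpos : 0 < E := by positivity
    refine ⟨2 * Real.exp E, ?_, ?_⟩
    · have : (1:ℝ) < Real.exp E := Real.one_lt_exp_iff.mpr hEpos
      linarith
    · set lam : ℝ := 2 * Real.exp E with hlam
      have hlam2 : 2 < lam := by
        have : (1:ℝ) < Real.exp E := Real.one_lt_exp_iff.mpr hEpos
        simp only [hlam]; linarith
      have hlpos : (0:ℝ) < lam := by linarith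
      have hlog : Real.log (lam / 2) = E := by
        rw [hlam]
        rw [show 2 * Real.exp E / 2 = Real.exp E by ring, Real.log_exp]
      have h1 := omega_lower lam hlam2
      have h2 : lam ^ ((1:ℝ)/2) * ((1 / (4 * Real.sqrt 2)) * lam ^ (-(1:ℝ)/2) * Real.log (lam / 2))
          ≤ lam ^ ((1:ℝ)/2) * (volume (Omega lam)).toReal :=
        mul_le_mul_of_nonneg_left h1 (Real.rpow_nonneg (le_of_lt hlpos) _)
      have h3 : lam ^ ((1:ℝ)/2) * ((1 / (4 * Real.sqrt 2)) * lam ^ (-(1:ℝ)/2) * Real.log (lam / 2))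
          = (1 / (4 * Real.sqrt 2)) * E := by
        rw [hlog]
        have : lam ^ ((1:ℝ)/2) * lam ^ (-(1:ℝ)/2) = 1 := by
          rw [← Real.rpow_add hlpos]
          norm_num
        calc lam ^ ((1:ℝ)/2) * ((1 / (4 * Real.sqrt 2)) * lam ^ (-(1:ℝ)/2) * E)
            = (lam ^ ((1:ℝ)/2) * lam ^ (-(1:ℝ)/2)) * ((1 / (4 * Real.sqrt 2)) * E) := by ring
          _ = (1 / (4 * Real.sqrt 2)) * E := by rw [this]; ring
      have h4 : (1 / (4 * Real.sqrt 2)) * E = |C| + 1 := by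
        rw [hE]
        field_simp
      have : C < |C| + 1 := by
        have := le_abs_self C
        linarith
      calc C < |C| + 1 := this
        _ = lam ^ ((1:ℝ)/2) * ((1 / (4 * Real.sqrt 2)) * lam ^ (-(1:ℝ)/2) * Real.log (lam / 2)) := by
            rw [h3, h4]
        _ ≤ _ := h2
end
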